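/- Under the hypotheses of the previous setup (V''_g irreducible, multiplicity one in V_g, n(V''_g) = b(g), all other composition factors E' of V_g have n(E') > b(g), and V'_g defined by the descending induction), the following holds: if for some g, g' ∈ G the irreducible representation V''_{g'} occurs in V'_g, then V''_{g'} ≅ V''_g. In particular V''_g is uniquely determined by V'_g. -/

import Mathlib

open Module

/-- The rational group algebra of `W`. -/
abbrev GA (W : Type) [Group W] : Type := MonoidAlgebra ℚ W

/-- A finite-dimensional representation of `W` over `ℚ`, viewed as a module
over the group algebra `ℚ[W]`. -/
structure RepQ (W : Type) [Group W] where
  carrier : Type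
  [ab : AddCommGroup carrier]
  [modQ : Module ℚ carrier]
  [modA : Module (GA W) carrier]
  [tower : IsScalarTower ℚ (GA W) carrier]
  [fd : FiniteDimensional ℚ carrier]

attribute [instance] RepQ.ab RepQ.modQ RepQ.modA RepQ.tower RepQ.fd

variable {W : Type} [Group W]

/-- Isomorphism of representations. -/
def RepQ.Iso (V₁ V₂ : RepQ W) : Prop :=
  Nonempty (V₁.carrier ≃ₗ[GA W] V₂.carrier)

/-- `E` is irreducible. -/
def RepQ.IsIrr (E : RepQ W) : Prop := IsSimpleModule (GA W) E.carrier

/-- `E` occurs in `M`, i.e. `E` is isomorphic to a submodule of `M`. -/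
def Occ (A : Type) [Ring A] (E M : Type) [AddCommGroup E] [Module A E]
    [AddCommGroup M] [Module A M] : Prop :=
  ∃ S : Submodule A M, Nonempty (E ≃ₗ[A] ↥S)

/-- `E` occurs with multiplicity one in `M` (for semisimple modules over `ℚ[W]`
this is equivalent to: there is exactly one submodule of `M` isomorphic to `E`). -/
def OccMultOne (A : Type) [Ring A] (E M : Type) [AddCommGroup E] [Module A E]
    [AddCommGroup M] [Module A M] : Prop :=
  Occ A E M ∧ ∀ S₁ S₂ : Submodule A M,
    Nonempty (E ≃ₗ[A] ↥S₁) → Nonempty (E ≃ₗ[A] ↥S₂) → S₁ = S₂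

section OccHelpers

variable {A : Type} [Ring A]

/-- Transport an occurrence along a linear equivalence. -/
lemma occ_congr {E F M : Type} [AddCommGroup E] [Module A E] [AddCommGroup F] [Module A F]
    [AddCommGroup M] [Module A M] (e : E ≃ₗ[A] F) (h : Occ A F M) : Occ A E M := by
  obtain ⟨S, ⟨i⟩⟩ := h
  exact ⟨S, ⟨e.trans i⟩⟩

/-- An occurrence in a submodule gives an occurrence in the ambient module. -/
lemma occ_of_occ_submodule {E M : Type} [AddCommGroup E] [Module A E]
    [AddCommGroup M] [Module A M] (P : Submodule A M) (h : Occ A E ↥P) : Occ A E M := by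
  obtain ⟨T, ⟨i⟩⟩ := h
  exact ⟨T.map P.subtype,
    ⟨i.trans (Submodule.equivMapOfInjective P.subtype P.injective_subtype T)⟩⟩

/-- A submodule occurs in any larger submodule. -/
lemma occ_self_of_le {M : Type} [AddCommGroup M] [Module A M] {S P : Submodule A M}
    (h : S ≤ P) : Occ A ↥S ↥P :=
  ⟨S.comap P.subtype, ⟨(Submodule.comapSubtypeEquivOfLe h).symm⟩⟩

/-- A simple submodule contained in a sup of simple submodules is isomorphic to one
of them. -/
lemma exists_iso_of_le_sSup {M : Type} [AddCommGroup M] [Module A M]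
    (S₀ : Set (Submodule A M)) (hS : ∀ S ∈ S₀, IsSimpleModule A ↥S)
    (T : Submodule A M) (hT : IsSimpleModule A ↥T) (hle : T ≤ sSup S₀) :
    ∃ S ∈ S₀, Nonempty (↥T ≃ₗ[A] ↥S) := by
  set N : Submodule A M := sSup S₀ with hN
  have hSN : ∀ S ∈ S₀, S ≤ N := fun S hs => le_sSup hs
  set S₁ : Set (Submodule A ↥N) := (fun S => S.comap N.subtype) '' S₀ with hS₁
  have hmap : ∀ S ∈ S₀, (S.comap N.subtype).map N.subtype = S := by
    intro S hs
    rw [Submodule.map_comap_subtype, inf_eq_right.mpr (hSN S hs)]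
  have hS' : ∀ S' ∈ S₁, IsSimpleModule A ↥S' := by
    rintro S' ⟨S, hs, rfl⟩
    haveI := hS S hs
    exact IsSimpleModule.congr (Submodule.comapSubtypeEquivOfLe (hSN S hs))
  have hsup : sSup S₁ = ⊤ := by
    apply Submodule.map_injective_of_injective N.injective_subtype
    rw [Submodule.map_top, Submodule.range_subtype,
      (Submodule.gc_map_comap N.subtype).l_sSup]
    rw [hS₁, iSup_image]
    calc ⨆ S ∈ S₀, Submodule.map N.subtype (S.comap N.subtype)
        = ⨆ S ∈ S₀, S := iSup_congr fun S => iSup_congr fun hs => hmap S hs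
      _ = N := by rw [← sSup_eq_iSup]
  haveI : IsSemisimpleModule A ↥N := by
    apply IsSemisimpleModule.of_sSup_simples_eq_top
    apply le_antisymm le_top
    rw [← hsup]
    exact sSup_le_sSup fun S' hs' => hS' S' hs'
  set T' : Submodule A ↥N := T.comap N.subtype with hT'def
  haveI hT'simple : IsSimpleModule A ↥T' := by
    haveI := hT
    exact IsSimpleModule.congr (Submodule.comapSubtypeEquivOfLe hle)
  obtain ⟨C, hC⟩ := exists_isCompl T'
  set f : ↥N →ₗ[A] ↥T' := T'.linearProjOfIsCompl C hC with hfdef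
  have hfne : f ≠ 0 := by
    haveI := IsSimpleModule.nontrivial A ↥T'
    obtain ⟨x, hx⟩ := exists_ne (0 : ↥T')
    intro h0
    apply hx
    have : f x = x := Submodule.linearProjOfIsCompl_apply_left hC x
    rw [h0] at this
    simpa using this.symm
  have hexists : ∃ S' ∈ S₁, ¬ S' ≤ LinearMap.ker f := by
    by_contra hall
    push_neg at hall
    have : sSup S₁ ≤ LinearMap.ker f := sSup_le hall
    rw [hsup, top_le_iff, LinearMap.ker_eq_top] at this
    exact hfne this
  obtain ⟨S', hS'mem, hSker⟩ := hexists
  have hgne : f ∘ₗ S'.subtype ≠ 0 := by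
    intro h0
    apply hSker
    intro x hx
    have : (f ∘ₗ S'.subtype) ⟨x, hx⟩ = 0 := by rw [h0]; rfl
    simpa [LinearMap.mem_ker] using this
  haveI := hS' S' hS'mem
  have hbij := LinearMap.bijective_of_ne_zero hgne
  obtain ⟨S, hs, rfl⟩ := hS'mem
  refine ⟨S, hs, ⟨?_⟩⟩
  exact (Submodule.comapSubtypeEquivOfLe hle).symm.trans
    ((LinearEquiv.ofBijective _ hbij).symm.trans
      (Submodule.comapSubtypeEquivOfLe (hSN S hs)))

end OccHelpers

/-- If `V''_[g']` occurs in `V'_g` then `V''_[g'] ≅ V''_g`; in particular `V''_g`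
is uniquely determined by `V'_g`. -/
theorem Vsecond_determined_by_Vprime (G : Type) (nu : ℕ) (b : G → ℕ) (hb : ∀ g, b g ≤ nu)
    (V : G → RepQ W) (V' : ∀ g, Submodule (GA W) (V g).carrier)
    (htop : ∀ g, b g = nu → V' g = ⊤)
    (hrec : ∀ g, b g < nu → V' g = sSup {S : Submodule (GA W) (V g).carrier |
      IsSimpleModule (GA W) ↥S ∧ ∀ g', b g < b g' → ¬ Occ (GA W) ↥S ↥(V' g')})
    (n : RepQ W → ℕ) (hn : ∀ E F : RepQ W, E.Iso F → n E = n F)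
    (V'' : G → RepQ W) (hirr : ∀ g, (V'' g).IsIrr)
    (hmult : ∀ g, OccMultOne (GA W) (V'' g).carrier (V g).carrier)
    (hnb : ∀ g, n (V'' g) = b g)
    (hother : ∀ g (E : RepQ W), E.IsIrr → Occ (GA W) E.carrier (V g).carrier →
      ¬ E.Iso (V'' g) → n E > b g) :
    ∀ g g' : G, Occ (GA W) (V'' g').carrier ↥(V' g) → (V'' g').Iso (V'' g) := by
  
  -- First: the module of each `g0` occurs in `V' g0`.
  have hA : ∀ g0, Occ (GA W) (V'' g0).carrier ↥(V' g0) := by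
    intro g0
    obtain ⟨S, ⟨i⟩⟩ := (hmult g0).1
    rcases eq_or_lt_of_le (hb g0) with heq | hlt
    · rw [htop g0 heq]
      exact occ_congr i (occ_self_of_le le_top)
    · have hmem : S ∈ {S : Submodule (GA W) (V g0).carrier |
          IsSimpleModule (GA W) ↥S ∧ ∀ g', b g0 < b g' → ¬ Occ (GA W) ↥S ↥(V' g')} := by
        constructor
        · haveI : IsSimpleModule (GA W) (V'' g0).carrier := hirr g0
          exact IsSimpleModule.congr i.symm
        · intro g'' hlt' hoccS
          have h1 : Occ (GA W) (V'' g0).carrier ↥(V' g'') := occ_congr i hoccS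
          have h2 : Occ (GA W) (V'' g0).carrier (V g'').carrier :=
            occ_of_occ_submodule _ h1
          by_cases hiso : (V'' g0).Iso (V'' g'')
          · have : b g0 = b g'' := by rw [← hnb g0, ← hnb g'', hn _ _ hiso]
            omega
          · have := hother g'' (V'' g0) (hirr g0) h2 hiso
            rw [hnb g0] at this
            omega
      have hle : S ≤ V' g0 := by rw [hrec g0 hlt]; exact le_sSup hmem
      exact occ_congr i (occ_self_of_le hle)
  intro g g' hocc
  by_contra hniso
  have hocc2 : Occ (GA W) (V'' g').carrier (V g).carrier := occ_of_occ_submodule _ hocc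
  have hgt : b g < b g' := by
    have := hother g (V'' g') (hirr g') hocc2 hniso
    rw [hnb g'] at this; omega
  have hlt : b g < nu := lt_of_lt_of_le hgt (hb g')
  obtain ⟨T, ⟨i⟩⟩ := hocc
  set T' : Submodule (GA W) (V g).carrier := T.map (V' g).subtype with hT'def
  have em : ↥T ≃ₗ[GA W] ↥T' :=
    Submodule.equivMapOfInjective (V' g).subtype (V' g).injective_subtype T
  have hT'simple : IsSimpleModule (GA W) ↥T' := by
    haveI : IsSimpleModule (GA W) (V'' g').carrier := hirr g'
    exact IsSimpleModule.congr (em.symm.trans i.symm)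
  have hT'le : T' ≤ sSup {S : Submodule (GA W) (V g).carrier |
      IsSimpleModule (GA W) ↥S ∧ ∀ g'', b g < b g'' → ¬ Occ (GA W) ↥S ↥(V' g'')} := by
    rw [← hrec g hlt]
    exact Submodule.map_subtype_le _ _
  obtain ⟨S, hs, ⟨e⟩⟩ := exists_iso_of_le_sSup _ (fun S hs => hs.1) T' hT'simple hT'le
  exact hs.2 g' hgt
    (occ_congr (e.symm.trans (em.symm.trans i.symm)) (hA g'))
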